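/- On a bounded domain U ⊆ ℝⁿ with n ≥ 3, the Morrey–Sobolev space L^{r,n-r}_1(U) (functions whose gradient lies in the Morrey space L^{r,n-r}(U)) with 2 < r < n embeds continuously into BMO(U): there is C = C(n,r,U) with [f]_{BMO(U)} ≤ C ‖∇f‖_{L^{r,n-r}(U)}. -/

import Mathlib

open MeasureTheory Metric ENNReal NNReal Set

/-- The BMO seminorm of `f` on `U ⊆ ℝⁿ`: the supremum over balls `B ⊆ U` of the mean
oscillation `⨍_B |f − ⨍_B f|`. -/
noncomputable def bmoSeminorm {n : ℕ} (U : Set (Fin n → ℝ)) (f : (Fin n → ℝ) → ℝ) : ℝ≥0∞ :=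
  ⨆ (x : Fin n → ℝ) (ρ : {ρ : ℝ // 0 < ρ}) (_ : Metric.ball x (ρ : ℝ) ⊆ U),
    (volume (Metric.ball x (ρ : ℝ)))⁻¹ *
      ∫⁻ y in Metric.ball x (ρ : ℝ),
        ENNReal.ofReal |f y - ⨍ z in Metric.ball x (ρ : ℝ), f z|

/-- The Morrey norm `‖f‖_{L^{r,λ}(U)} = sup_{x ∈ U, 0 < ρ ≤ diam U} ρ^{-λ/r} ‖f‖_{L^r(B_ρ(x) ∩ U)}`. -/
noncomputable def morreyNorm {n : ℕ} (r lam : ℝ) (U : Set (Fin n → ℝ))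
    (f : (Fin n → ℝ) → ℝ) : ℝ≥0∞ :=
  ⨆ (x : Fin n → ℝ) (_ : x ∈ U) (ρ : {ρ : ℝ // 0 < ρ ∧ ρ ≤ Metric.diam U}),
    ENNReal.ofReal ((ρ : ℝ) ^ (-(lam / r))) *
      eLpNorm f (ENNReal.ofReal r) (volume.restrict (Metric.ball x ρ ∩ U))

variable {n : ℕ}

lemma lint_affine (hn : 1 ≤ n) (G : (Fin n → ℝ) → ℝ≥0∞) (hG : Measurable G)
    {t : ℝ} (ht : t ≠ 0) (c : Fin n → ℝ) :
    ∫⁻ y, G (t • y + c) = ENNReal.ofReal |(t ^ n)⁻¹| * ∫⁻ w, G w := by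
  have h2 : ∫⁻ y, G (t • y + c) ∂volume
      = ∫⁻ w, G (w + c) ∂(Measure.map (t • ·) volume) :=
    (lintegral_map (hG.comp (measurable_add_const c)) (measurable_const_smul t)).symm
  rw [h2, Measure.map_addHaar_smul volume ht, lintegral_smul_measure,
    lintegral_add_right_eq_self]
  congr 3
  simp [Module.finrank_fintype_fun_eq_card]

lemma subst_ball (hn : 1 ≤ n) (G : (Fin n → ℝ) → ℝ≥0∞) (hG : Measurable G)
    (x : Fin n → ℝ) (ρ : ℝ) {s : ℝ} (hs2 : 1/2 ≤ s) (hs1 : s ≤ 1)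
    {p : Fin n → ℝ} (hp : p ∈ ball x ρ) :
    ∫⁻ y in ball x ρ, G (s • y + (1 - s) • p)
      ≤ (2 : ℝ≥0∞) ^ n * ∫⁻ w in ball x ρ, G w := by
  have hs : (0:ℝ) < s := by linarith
  have hmem : ∀ y ∈ ball x ρ, s • y + (1 - s) • p ∈ ball x ρ := fun y hy =>
    (convex_ball x ρ) hy hp hs.le (by linarith) (by ring)
  calc ∫⁻ y in ball x ρ, G (s • y + (1 - s) • p)
      = ∫⁻ y in ball x ρ, (ball x ρ).indicator G (s • y + (1 - s) • p) := by
        refine setLIntegral_congr_fun measurableSet_ball (fun y hy => ?_)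
        rw [Set.indicator_of_mem (hmem y hy)]
    _ ≤ ∫⁻ y, (ball x ρ).indicator G (s • y + (1 - s) • p) :=
        setLIntegral_le_lintegral _ _
    _ = ENNReal.ofReal |(s ^ n)⁻¹| * ∫⁻ w, (ball x ρ).indicator G w :=
        lint_affine hn _ (hG.indicator measurableSet_ball) hs.ne' _
    _ ≤ (2 : ℝ≥0∞) ^ n * ∫⁻ w in ball x ρ, G w := by
        rw [lintegral_indicator measurableSet_ball _]
        refine mul_le_mul_left ?_ _
        have h2 : ((s:ℝ) ^ n)⁻¹ ≤ 2 ^ n := by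
          rw [← inv_pow]
          gcongr
          rw [inv_le_comm₀] <;> linarith
        calc ENNReal.ofReal |(s ^ n)⁻¹| ≤ ENNReal.ofReal (2 ^ n) := by
              rw [abs_of_nonneg (by positivity)]; exact ENNReal.ofReal_le_ofReal h2
          _ = (2 : ℝ≥0∞) ^ n := by
              rw [ENNReal.ofReal_pow (by norm_num)]; norm_num

lemma ftc_bound {U : Set (Fin n → ℝ)} (hU : IsOpen U) {f : (Fin n → ℝ) → ℝ}
    (hf : DifferentiableOn ℝ f U)
    {x : Fin n → ℝ} {ρ : ℝ} (hρ : 0 < ρ) (hsub : ball x ρ ⊆ U)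
    {y z : Fin n → ℝ} (hy : y ∈ ball x ρ) (hz : z ∈ ball x ρ) :
    ENNReal.ofReal |f y - f z| ≤
      ENNReal.ofReal (2 * ρ) *
        ∫⁻ t in Set.Ioc (0:ℝ) 1, ENNReal.ofReal ‖fderiv ℝ f (z + t • (y - z))‖ := by
  set φ : ℝ → ℝ := fun t => fderiv ℝ f (z + t • (y - z)) (y - z) with hφ
  have hseg : ∀ t ∈ Set.Icc (0:ℝ) 1, z + t • (y - z) ∈ ball x ρ := by
    intro t ht
    have h := (convex_ball x ρ) hz hy (by linarith [ht.2] : (0:ℝ) ≤ 1 - t) ht.1 (by ring)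
    convert h using 1
    module
  have hda : ∀ t ∈ Set.Icc (0:ℝ) 1, HasDerivAt (fun s : ℝ => f (z + s • (y - z))) (φ t) t := by
    intro t ht
    have hw : HasDerivAt (fun s : ℝ => z + s • (y - z)) (y - z) t := by
      simpa using ((hasDerivAt_id t).smul_const (y - z)).const_add z
    exact ((hf.differentiableAt (hU.mem_nhds (hsub (hseg t ht)))).hasFDerivAt).comp_hasDerivAt t hw
  have hyz : ‖y - z‖ ≤ 2 * ρ := by
    rw [← dist_eq_norm]
    calc dist y z ≤ dist y x + dist x z := dist_triangle y x z
      _ ≤ 2 * ρ := by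
          have h1 := mem_ball.1 hy
          have h2 := mem_ball.1 hz
          rw [dist_comm x z] at *
          linarith
  have hptwise : ∀ t : ℝ, |φ t| ≤ 2 * ρ * ‖fderiv ℝ f (z + t • (y - z))‖ := by
    intro t
    calc |φ t| ≤ ‖fderiv ℝ f (z + t • (y - z))‖ * ‖y - z‖ :=
          (fderiv ℝ f (z + t • (y - z))).le_opNorm (y - z)
      _ ≤ 2 * ρ * ‖fderiv ℝ f (z + t • (y - z))‖ := by
          rw [mul_comm]
          exact mul_le_mul_of_nonneg_right hyz (norm_nonneg _)
  set I : ℝ≥0∞ := ∫⁻ t in Set.Ioc (0:ℝ) 1, ENNReal.ofReal ‖fderiv ℝ f (z + t • (y - z))‖ with hI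
  by_cases hItop : I = ⊤
  · rw [hItop, ENNReal.mul_top (by simp [hρ] : ENNReal.ofReal (2 * ρ) ≠ 0)]
    exact le_top
  -- φ is measurable
  have hφm : Measurable φ := by
    apply (measurable_fderiv_apply_const ℝ f (y - z)).comp
    fun_prop
  have hφint : IntegrableOn φ (Set.Ioc (0:ℝ) 1) := by
    refine ⟨hφm.aestronglyMeasurable.restrict, ?_⟩
    rw [hasFiniteIntegral_iff_norm]
    calc ∫⁻ t in Set.Ioc (0:ℝ) 1, ENNReal.ofReal ‖φ t‖
        ≤ ∫⁻ t in Set.Ioc (0:ℝ) 1,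
            ENNReal.ofReal (2 * ρ) * ENNReal.ofReal ‖fderiv ℝ f (z + t • (y - z))‖ := by
          refine lintegral_mono fun t => ?_
          rw [← ENNReal.ofReal_mul (by positivity)]
          exact ENNReal.ofReal_le_ofReal (by simpa [Real.norm_eq_abs] using hptwise t)
      _ = ENNReal.ofReal (2 * ρ) * I := lintegral_const_mul' _ _ ENNReal.ofReal_ne_top
      _ < ⊤ := ENNReal.mul_lt_top ENNReal.ofReal_lt_top (lt_top_iff_ne_top.2 hItop)
  have hint : IntervalIntegrable φ volume 0 1 := by
    rw [intervalIntegrable_iff, Set.uIoc_of_le zero_le_one]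
    exact hφint
  have hkey : ∫ t in (0:ℝ)..1, φ t = f y - f z := by
    have h := intervalIntegral.integral_eq_sub_of_hasDerivAt
      (f := fun s : ℝ => f (z + s • (y - z))) (f' := φ)
      (by rw [Set.uIcc_of_le zero_le_one]; exact hda) hint
    simpa using h
  calc ENNReal.ofReal |f y - f z| = ENNReal.ofReal |∫ t in (0:ℝ)..1, φ t| := by rw [hkey]
    _ ≤ ENNReal.ofReal (∫ t in (0:ℝ)..1, |φ t|) :=
        ENNReal.ofReal_le_ofReal (intervalIntegral.abs_integral_le_integral_abs zero_le_one)
    _ = ENNReal.ofReal (∫ t in Set.Ioc (0:ℝ) 1, |φ t|) := by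
        rw [intervalIntegral.integral_of_le zero_le_one]
    _ = ∫⁻ t in Set.Ioc (0:ℝ) 1, ENNReal.ofReal |φ t| :=
        ofReal_integral_eq_lintegral_ofReal hφint.abs (ae_of_all _ fun t => abs_nonneg _)
    _ ≤ ∫⁻ t in Set.Ioc (0:ℝ) 1,
          ENNReal.ofReal (2 * ρ) * ENNReal.ofReal ‖fderiv ℝ f (z + t • (y - z))‖ := by
        refine lintegral_mono fun t => ?_
        rw [← ENNReal.ofReal_mul (by positivity)]
        exact ENNReal.ofReal_le_ofReal (hptwise t)
    _ = ENNReal.ofReal (2 * ρ) * I := lintegral_const_mul' _ _ ENNReal.ofReal_ne_top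

lemma avg_bound {α : Type*} [MeasurableSpace α] {μ : Measure α} {B : Set α}
    (h0 : μ B ≠ 0) (hT : μ B ≠ ⊤)
    {f : α → ℝ} (hf : IntegrableOn f B μ) (a : ℝ) :
    ENNReal.ofReal |a - ⨍ z in B, f z ∂μ| ≤
      (μ B)⁻¹ * ∫⁻ z in B, ENNReal.ofReal |a - f z| ∂(μ) := by
  set ν := μ.restrict B with hν
  have hνuniv : ν Set.univ = μ B := by simp [hν]
  haveI : IsFiniteMeasure ν := ⟨by rw [hνuniv]; exact lt_top_iff_ne_top.2 hT⟩
  set m : ℝ := (μ B).toReal with hm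
  have hm0 : 0 < m := ENNReal.toReal_pos h0 hT
  have hconst : Integrable (fun _ : α => a) ν := integrable_const a
  have hsub : Integrable (fun z => a - f z) ν := hconst.sub hf
  have havg : ⨍ z, f z ∂ν = m⁻¹ * ∫ z, f z ∂ν := by
    rw [average_eq, measureReal_def, hνuniv]; rfl
  have h1 : |a - ⨍ z, f z ∂ν| ≤ m⁻¹ * ∫ z, |a - f z| ∂ν := by
    have hsplit : a - ⨍ z, f z ∂ν = m⁻¹ * ∫ z, (a - f z) ∂ν := by
      rw [integral_sub hconst hf, havg, integral_const, measureReal_def, hνuniv]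
      simp only [smul_eq_mul]
      rw [hm]
      field_simp
      have hne : (μ B).toReal ≠ 0 := (ENNReal.toReal_pos h0 hT).ne'
      field_simp [hne]
    rw [hsplit, abs_mul, abs_of_nonneg (by positivity : (0:ℝ) ≤ m⁻¹)]
    exact mul_le_mul_of_nonneg_left (by simpa [Real.norm_eq_abs] using norm_integral_le_integral_norm (μ := ν) (fun z => a - f z)) (by positivity)
  calc ENNReal.ofReal |a - ⨍ z in B, f z ∂μ|
      ≤ ENNReal.ofReal (m⁻¹ * ∫ z, |a - f z| ∂ν) := ENNReal.ofReal_le_ofReal h1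
    _ = ENNReal.ofReal m⁻¹ * ENNReal.ofReal (∫ z, |a - f z| ∂ν) :=
        ENNReal.ofReal_mul (by positivity)
    _ = (μ B)⁻¹ * ∫⁻ z in B, ENNReal.ofReal |a - f z| ∂μ := by
        rw [ofReal_integral_eq_lintegral_ofReal hsub.abs (ae_of_all _ fun z => abs_nonneg _),
          ENNReal.ofReal_inv_of_pos hm0, hm, ENNReal.ofReal_toReal hT]

lemma reorder (G : (Fin n → ℝ) → ℝ≥0∞) (hG : Measurable G) (B : Set (Fin n → ℝ))
    (T : Set ℝ) :
    ∫⁻ y in B, ∫⁻ z in B, ∫⁻ t in T, G (z + t • (y - z))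
      = ∫⁻ t in T, ∫⁻ y in B, ∫⁻ z in B, G (z + t • (y - z)) := by
  have hmap : Measurable fun p : ((Fin n → ℝ) × ℝ) × (Fin n → ℝ) =>
      G (p.2 + p.1.2 • (p.1.1 - p.2)) := by
    apply hG.comp
    fun_prop
  have step1 : ∀ y : Fin n → ℝ,
      (∫⁻ z in B, ∫⁻ t in T, G (z + t • (y - z)))
        = ∫⁻ t in T, ∫⁻ z in B, G (z + t • (y - z)) := by
    intro y
    apply lintegral_lintegral_swap
    exact (hG.comp (by fun_prop : Measurable fun p : (Fin n → ℝ) × ℝ =>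
      p.1 + p.2 • (y - p.1))).aemeasurable
  calc ∫⁻ y in B, ∫⁻ z in B, ∫⁻ t in T, G (z + t • (y - z))
      = ∫⁻ y in B, ∫⁻ t in T, ∫⁻ z in B, G (z + t • (y - z)) := by
        exact lintegral_congr fun y => step1 y
    _ = ∫⁻ t in T, ∫⁻ y in B, ∫⁻ z in B, G (z + t • (y - z)) := by
        apply lintegral_lintegral_swap
        have : Measurable (Function.uncurry fun (p : (Fin n → ℝ) × ℝ) (z : Fin n → ℝ) =>
            G (z + p.2 • (p.1 - z))) := hmap
        exact (Measurable.lintegral_prod_right this).aemeasurable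

lemma triple_bound (hn : 1 ≤ n) (G : (Fin n → ℝ) → ℝ≥0∞) (hG : Measurable G)
    (x : Fin n → ℝ) (ρ : ℝ) :
    ∫⁻ t in Set.Ioc (0:ℝ) 1, ∫⁻ y in ball x ρ, ∫⁻ z in ball x ρ, G (z + t • (y - z))
      ≤ (2 : ℝ≥0∞) ^ n * volume (ball x ρ) * ∫⁻ w in ball x ρ, G w := by
  set B := ball x ρ with hB
  set K := ∫⁻ w in B, G w with hK
  have hsplit : Set.Ioc (0:ℝ) 1 = Set.Ioc (0:ℝ) (1/2) ∪ Set.Ioc (1/2 : ℝ) 1 :=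
    (Set.Ioc_union_Ioc_eq_Ioc (by norm_num) (by norm_num)).symm
  have hdis : Disjoint (Set.Ioc (0:ℝ) (1/2)) (Set.Ioc (1/2 : ℝ) 1) :=
    Set.Ioc_disjoint_Ioc_of_le le_rfl
  rw [hsplit, lintegral_union measurableSet_Ioc hdis]
  have hbound1 : ∀ t ∈ Set.Ioc (0:ℝ) (1/2),
      (∫⁻ y in B, ∫⁻ z in B, G (z + t • (y - z))) ≤ volume B * ((2:ℝ≥0∞) ^ n * K) := by
    intro t ht
    have h1 : ∀ y ∈ B, (∫⁻ z in B, G (z + t • (y - z))) ≤ (2:ℝ≥0∞) ^ n * K := by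
      intro y hy
      have hcongr : (∫⁻ z in B, G (z + t • (y - z)))
          = ∫⁻ z in B, G ((1 - t) • z + (1 - (1 - t)) • y) := by
        apply lintegral_congr fun z => ?_
        congr 1
        module
      rw [hcongr]
      exact subst_ball hn G hG x ρ (by linarith [ht.2]) (by linarith [ht.1]) hy
    calc (∫⁻ y in B, ∫⁻ z in B, G (z + t • (y - z)))
        ≤ ∫⁻ _ in B, (2:ℝ≥0∞) ^ n * K := by
          refine lintegral_mono_ae ((ae_restrict_iff' measurableSet_ball).2 (ae_of_all _ h1))
      _ = volume B * ((2:ℝ≥0∞) ^ n * K) := by rw [setLIntegral_const, mul_comm]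
  have hbound2 : ∀ t ∈ Set.Ioc (1/2 : ℝ) 1,
      (∫⁻ y in B, ∫⁻ z in B, G (z + t • (y - z))) ≤ volume B * ((2:ℝ≥0∞) ^ n * K) := by
    intro t ht
    have hswap : (∫⁻ y in B, ∫⁻ z in B, G (z + t • (y - z)))
        = ∫⁻ z in B, ∫⁻ y in B, G (z + t • (y - z)) := by
      apply lintegral_lintegral_swap
      exact (hG.comp (by fun_prop : Measurable fun p : (Fin n → ℝ) × (Fin n → ℝ) =>
        p.2 + t • (p.1 - p.2))).aemeasurable
    rw [hswap]
    have h1 : ∀ z ∈ B, (∫⁻ y in B, G (z + t • (y - z))) ≤ (2:ℝ≥0∞) ^ n * K := by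
      intro z hz
      have hcongr : (∫⁻ y in B, G (z + t • (y - z)))
          = ∫⁻ y in B, G (t • y + (1 - t) • z) := by
        apply lintegral_congr fun y => ?_
        congr 1
        module
      rw [hcongr]
      exact subst_ball hn G hG x ρ (le_of_lt ht.1) ht.2 hz
    calc (∫⁻ z in B, ∫⁻ y in B, G (z + t • (y - z)))
        ≤ ∫⁻ _ in B, (2:ℝ≥0∞) ^ n * K := by
          refine lintegral_mono_ae ((ae_restrict_iff' measurableSet_ball).2 (ae_of_all _ h1))
      _ = volume B * ((2:ℝ≥0∞) ^ n * K) := by rw [setLIntegral_const, mul_comm]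
  have hmeas : volume (Set.Ioc (0:ℝ) (1/2)) = ENNReal.ofReal (1/2) := by
    rw [Real.volume_Ioc]; norm_num
  have hmeas2 : volume (Set.Ioc (1/2:ℝ) 1) = ENNReal.ofReal (1/2) := by
    rw [Real.volume_Ioc]; norm_num
  calc (∫⁻ t in Set.Ioc (0:ℝ) (1/2), ∫⁻ y in B, ∫⁻ z in B, G (z + t • (y - z)))
        + ∫⁻ t in Set.Ioc (1/2:ℝ) 1, ∫⁻ y in B, ∫⁻ z in B, G (z + t • (y - z))
      ≤ (∫⁻ _ in Set.Ioc (0:ℝ) (1/2), volume B * ((2:ℝ≥0∞) ^ n * K))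
        + ∫⁻ _ in Set.Ioc (1/2:ℝ) 1, volume B * ((2:ℝ≥0∞) ^ n * K) := by
        exact add_le_add
          (lintegral_mono_ae ((ae_restrict_iff' measurableSet_Ioc).2 (ae_of_all _ hbound1)))
          (lintegral_mono_ae ((ae_restrict_iff' measurableSet_Ioc).2 (ae_of_all _ hbound2)))
    _ = volume B * ((2:ℝ≥0∞) ^ n * K) * (ENNReal.ofReal (1/2) + ENNReal.ofReal (1/2)) := by
        rw [setLIntegral_const, setLIntegral_const, hmeas, hmeas2, mul_add]
    _ = (2 : ℝ≥0∞) ^ n * volume B * K := by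
        rw [← ENNReal.ofReal_add (by norm_num) (by norm_num)]
        norm_num
        ring

/-- **Endpoint Morrey embedding into BMO.**  On a bounded domain `U ⊆ ℝⁿ` with `n ≥ 3`,
the Morrey–Sobolev space `L^{r,n-r}_1(U)` (functions whose gradient lies in the Morrey
space `L^{r,n-r}(U)`) with `2 < r < n` embeds continuously into `BMO(U)`: there is
`C = C(n,r,U)` with `[f]_{BMO(U)} ≤ C ‖∇f‖_{L^{r,n-r}(U)}`. -/
theorem stmt_8 (n : ℕ) (hn : 3 ≤ n) (r : ℝ) (hr2 : 2 < r) (hrn : r < n)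
    (U : Set (Fin n → ℝ)) (hUopen : IsOpen U) (hUbdd : Bornology.IsBounded U) :
    ∃ C : ℝ, 0 < C ∧ ∀ f : (Fin n → ℝ) → ℝ, DifferentiableOn ℝ f U →
      bmoSeminorm U f
        ≤ ENNReal.ofReal C *
          morreyNorm r (n - r) U (fun x => ‖fderivWithin ℝ f U x‖) := by
  haveI : NeZero n := ⟨by omega⟩
  have hn1 : 1 ≤ n := by omega
  have hr0 : (0:ℝ) < r := by linarith
  set V : ℝ≥0∞ := volume (ball (0 : Fin n → ℝ) 1) with hV
  have hV0 : V ≠ 0 := (measure_ball_pos _ _ one_pos).ne'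
  have hVT : V ≠ ⊤ := measure_ball_lt_top.ne
  set v : ℝ := V.toReal with hv
  have hv0 : 0 < v := ENNReal.toReal_pos hV0 hVT
  refine ⟨2 ^ (n + 1) * v ^ (-(1/r)), by positivity, fun f hf => ?_⟩
  set M := morreyNorm r ((n:ℝ) - r) U (fun x => ‖fderivWithin ℝ f U x‖) with hM
  set C : ℝ := 2 ^ (n + 1) * v ^ (-(1/r)) with hC
  have hC0 : 0 < C := by positivity
  rw [bmoSeminorm]
  refine iSup_le fun x => iSup_le fun ρs => iSup_le fun hsub => ?_
  set ρ : ℝ := (ρs : ℝ) with hρdef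
  have hρ : 0 < ρ := ρs.2
  set B := ball x ρ with hBdef
  -- trivial if M = ⊤
  by_cases hMT : M = ⊤
  · rw [hMT, ENNReal.mul_top (by simp [hC0] : ENNReal.ofReal C ≠ 0)]
    exact le_top
  have hxU : x ∈ U := hsub (mem_ball_self hρ)
  have hρdiam : ρ ≤ Metric.diam U := by
    have key : ∀ s : ℝ, 0 < s → s < ρ → s ≤ Metric.diam U := by
      intro s hs0 hsρ
      have hd : dist (x + (fun _ => s : Fin n → ℝ)) x = s := by
        rw [dist_eq_norm, add_sub_cancel_left, pi_norm_const, Real.norm_eq_abs,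
          abs_of_pos hs0]
      have hmem : x + (fun _ => s : Fin n → ℝ) ∈ B := by
        rw [hBdef, mem_ball, hd]; exact hsρ
      calc s = dist (x + (fun _ => s : Fin n → ℝ)) x := hd.symm
        _ ≤ Metric.diam U := dist_le_diam_of_mem hUbdd (hsub hmem) hxU
    by_contra h
    push_neg at h
    have h1 : 0 < (Metric.diam U + ρ) / 2 := by
      have := Metric.diam_nonneg (s := U); linarith
    have h2 : (Metric.diam U + ρ) / 2 < ρ := by linarith
    have := key _ h1 h2
    linarith
  have hB0 : volume B ≠ 0 := (measure_ball_pos _ _ hρ).ne'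
  have hBT : volume B ≠ ⊤ := measure_ball_lt_top.ne
  set W : ℝ≥0∞ := volume B with hW
  have hvolB : W = ENNReal.ofReal (ρ ^ n * v) := by
    rw [hW, hBdef, Measure.addHaar_ball _ _ hρ.le, ENNReal.ofReal_mul (by positivity)]
    congr 2
    · congr 1
      simp [Module.finrank_fintype_fun_eq_card]
    · rw [hv, ENNReal.ofReal_toReal hVT]
  set G : (Fin n → ℝ) → ℝ≥0∞ := fun w => ENNReal.ofReal ‖fderiv ℝ f w‖ with hGdef
  have hG : Measurable G := (measurable_fderiv ℝ f).norm.ennreal_ofReal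
  set K := ∫⁻ w in B, G w with hK
  set re : ℝ≥0∞ := ENNReal.ofReal r with hre
  set Λ := eLpNorm (fun w => ‖fderiv ℝ f w‖) re (volume.restrict B) with hΛdef
  -- Morrey control of Λ
  have hΛM : Λ ≤ ENNReal.ofReal (ρ ^ (((n:ℝ) - r) / r)) * M := by
    have hcongr : Λ = eLpNorm (fun w => ‖fderivWithin ℝ f U w‖) re (volume.restrict (B ∩ U)) := by
      rw [Set.inter_eq_self_of_subset_left hsub]
      refine eLpNorm_congr_ae (((ae_restrict_iff' measurableSet_ball).2 (ae_of_all _ ?_)))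
      intro w hw
      show ‖fderiv ℝ f w‖ = ‖fderivWithin ℝ f U w‖
      rw [fderivWithin_of_isOpen hUopen (hsub hw)]
    have hle : ENNReal.ofReal (ρ ^ (-(((n:ℝ) - r) / r))) *
        eLpNorm (fun w => ‖fderivWithin ℝ f U w‖) re (volume.restrict (B ∩ U)) ≤ M := by
      rw [hM, morreyNorm]
      refine le_iSup_of_le x (le_iSup_of_le hxU (le_iSup_of_le ⟨ρ, hρ, hρdiam⟩ le_rfl))
    have hmul : ENNReal.ofReal (ρ ^ (((n:ℝ) - r) / r)) *
        (ENNReal.ofReal (ρ ^ (-(((n:ℝ) - r) / r))) *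
          eLpNorm (fun w => ‖fderivWithin ℝ f U w‖) re (volume.restrict (B ∩ U))) = Λ := by
      rw [← mul_assoc, ← ENNReal.ofReal_mul (by positivity), ← Real.rpow_add hρ]
      simp [hcongr]
    calc Λ = ENNReal.ofReal (ρ ^ (((n:ℝ) - r) / r)) *
        (ENNReal.ofReal (ρ ^ (-(((n:ℝ) - r) / r))) *
          eLpNorm (fun w => ‖fderivWithin ℝ f U w‖) re (volume.restrict (B ∩ U))) := hmul.symm
      _ ≤ ENNReal.ofReal (ρ ^ (((n:ℝ) - r) / r)) * M := by gcongr
  -- Hölder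
  have hKΛ : K ≤ Λ * W ^ ((1:ℝ) - 1/r) := by
    have h1 : K = eLpNorm (fun w => ‖fderiv ℝ f w‖) 1 (volume.restrict B) := by
      rw [eLpNorm_one_eq_lintegral_enorm, hK]
      refine lintegral_congr fun w => ?_
      rw [Real.enorm_eq_ofReal_abs, abs_of_nonneg (norm_nonneg _)]
    have h2 := eLpNorm_le_eLpNorm_mul_rpow_measure_univ (μ := volume.restrict B)
      (p := 1) (q := re) (by rw [hre]; exact ENNReal.one_le_ofReal.2 (by linarith))
      ((measurable_fderiv ℝ f).norm.aestronglyMeasurable)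
    rw [← h1] at h2
    have h3 : (volume.restrict B) Set.univ = W := by rw [Measure.restrict_apply_univ, hW]
    have h4 : (1:ℝ≥0∞).toReal = 1 := by simp
    have h5 : re.toReal = r := by rw [hre, ENNReal.toReal_ofReal hr0.le]
    rw [h3, h4, h5] at h2
    rw [show (1:ℝ) - 1/r = 1/1 - 1/r by norm_num]
    exact h2
  -- FTC + triple bound
  set D := ∫⁻ y in B, ∫⁻ z in B, ENNReal.ofReal |f y - f z| with hD
  have hDbound : D ≤ ENNReal.ofReal (2 * ρ) * ((2:ℝ≥0∞) ^ n * W * K) := by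
    have step1 : ∀ y ∈ B, (∫⁻ z in B, ENNReal.ofReal |f y - f z|)
        ≤ ENNReal.ofReal (2 * ρ) * ∫⁻ z in B, ∫⁻ t in Set.Ioc (0:ℝ) 1, G (z + t • (y - z)) := by
      intro y hy
      calc (∫⁻ z in B, ENNReal.ofReal |f y - f z|)
          ≤ ∫⁻ z in B, ENNReal.ofReal (2 * ρ) * ∫⁻ t in Set.Ioc (0:ℝ) 1, G (z + t • (y - z)) :=
            lintegral_mono_ae ((ae_restrict_iff' measurableSet_ball).2 (ae_of_all _
              fun z hz => ftc_bound hUopen hf hρ hsub hy hz))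
        _ = ENNReal.ofReal (2 * ρ) * ∫⁻ z in B, ∫⁻ t in Set.Ioc (0:ℝ) 1, G (z + t • (y - z)) :=
            lintegral_const_mul' _ _ ENNReal.ofReal_ne_top
    calc D ≤ ∫⁻ y in B, ENNReal.ofReal (2 * ρ) *
            ∫⁻ z in B, ∫⁻ t in Set.Ioc (0:ℝ) 1, G (z + t • (y - z)) :=
          lintegral_mono_ae ((ae_restrict_iff' measurableSet_ball).2 (ae_of_all _ step1))
      _ = ENNReal.ofReal (2 * ρ) *
            ∫⁻ y in B, ∫⁻ z in B, ∫⁻ t in Set.Ioc (0:ℝ) 1, G (z + t • (y - z)) :=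
          lintegral_const_mul' _ _ ENNReal.ofReal_ne_top
      _ = ENNReal.ofReal (2 * ρ) *
            ∫⁻ t in Set.Ioc (0:ℝ) 1, ∫⁻ y in B, ∫⁻ z in B, G (z + t • (y - z)) := by
          rw [reorder G hG B]
      _ ≤ ENNReal.ofReal (2 * ρ) * ((2:ℝ≥0∞) ^ n * W * K) := by
          gcongr
          exact triple_bound hn1 G hG x ρ
  -- finiteness
  have hexp0 : (0:ℝ) ≤ 1 - 1/r := by
    have h1 : 1/r ≤ 1 := by rw [div_le_one hr0]; linarith
    linarith
  have hKT : K ≠ ⊤ := by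
    refine ne_top_of_le_ne_top ?_ hKΛ
    exact ENNReal.mul_ne_top
      (ne_top_of_le_ne_top (ENNReal.mul_ne_top ENNReal.ofReal_ne_top hMT) hΛM)
      (ENNReal.rpow_ne_top_of_nonneg hexp0 hBT)
  have hDT : D ≠ ⊤ :=
    ne_top_of_le_ne_top
      (ENNReal.mul_ne_top ENNReal.ofReal_ne_top
        (ENNReal.mul_ne_top (ENNReal.mul_ne_top (ENNReal.pow_ne_top (by norm_num)) hBT) hKT))
      hDbound
  have hfmeas : AEStronglyMeasurable f (volume.restrict B) :=
    (hf.continuousOn.mono hsub).aestronglyMeasurable measurableSet_ball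
  have hfint : IntegrableOn f B := by
    have hexist : ∃ y₀ ∈ B, (∫⁻ z in B, ENNReal.ofReal |f y₀ - f z|) ≠ ⊤ := by
      by_contra hcon
      push_neg at hcon
      refine hDT ?_
      rw [hD]
      have hae : ∀ᵐ y ∂(volume.restrict B),
          (∫⁻ z in B, ENNReal.ofReal |f y - f z|) = (⊤:ℝ≥0∞) :=
        (ae_restrict_iff' measurableSet_ball).2 (ae_of_all _ hcon)
      rw [lintegral_congr_ae hae, setLIntegral_const, ENNReal.top_mul hB0]
    obtain ⟨y₀, hy₀B, hy₀⟩ := hexist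
    refine ⟨hfmeas, ?_⟩
    rw [hasFiniteIntegral_iff_norm]
    calc ∫⁻ z in B, ENNReal.ofReal ‖f z‖
        ≤ ∫⁻ z in B, (ENNReal.ofReal |f y₀ - f z| + ENNReal.ofReal |f y₀|) := by
          refine lintegral_mono fun z => ?_
          rw [← ENNReal.ofReal_add (abs_nonneg _) (abs_nonneg _)]
          refine ENNReal.ofReal_le_ofReal ?_
          rw [Real.norm_eq_abs]
          have ha1 := abs_sub_abs_le_abs_sub (f z) (f y₀)
          have ha2 : |f z - f y₀| = |f y₀ - f z| := abs_sub_comm _ _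
          linarith
      _ = (∫⁻ z in B, ENNReal.ofReal |f y₀ - f z|) + ENNReal.ofReal |f y₀| * W := by
          rw [lintegral_add_right _ measurable_const, setLIntegral_const]
      _ < ⊤ := by
          exact ENNReal.add_lt_top.2 ⟨lt_top_iff_ne_top.2 hy₀,
            ENNReal.mul_lt_top ENNReal.ofReal_lt_top (lt_top_iff_ne_top.2 hBT)⟩
  -- power bookkeeping
  have hWpow : W⁻¹ * W⁻¹ * W * W ^ ((1:ℝ) - 1/r) = ENNReal.ofReal ((ρ^n * v) ^ (-(1/r))) := by
    have e1 : W⁻¹ = W ^ (-1:ℝ) := (ENNReal.rpow_neg_one W).symm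
    have e2 : W = W ^ (1:ℝ) := (ENNReal.rpow_one W).symm
    calc W⁻¹ * W⁻¹ * W * W ^ ((1:ℝ) - 1/r)
        = W ^ (-1:ℝ) * W ^ (-1:ℝ) * W ^ (1:ℝ) * W ^ ((1:ℝ) - 1/r) := by rw [← e1, ← e2]
      _ = W ^ ((-1:ℝ) + (-1) + 1 + ((1:ℝ) - 1/r)) := by
          rw [← ENNReal.rpow_add _ _ hB0 hBT, ← ENNReal.rpow_add _ _ hB0 hBT,
            ← ENNReal.rpow_add _ _ hB0 hBT]
      _ = W ^ (-(1/r)) := by congr 1; ring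
      _ = ENNReal.ofReal ((ρ^n * v) ^ (-(1/r))) := by
          rw [hvolB, ← ENNReal.ofReal_rpow_of_pos (by positivity)]
  have hreal : 2 * ρ * 2^n * ρ ^ (((n:ℝ) - r)/r) * (ρ^n * v) ^ (-(1/r)) = C := by
    rw [Real.mul_rpow (by positivity) hv0.le, ← Real.rpow_natCast ρ n, ← Real.rpow_mul hρ.le]
    calc 2 * ρ * 2^n * ρ ^ (((n:ℝ) - r)/r) * (ρ ^ ((n:ℝ) * (-(1/r))) * v ^ (-(1/r)))
        = (2 * 2^n * v ^ (-(1/r))) * (ρ ^ (1:ℝ) * ρ ^ (((n:ℝ) - r)/r) * ρ ^ ((n:ℝ) * (-(1/r)))) := by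
          rw [Real.rpow_one]; ring
      _ = (2 * 2^n * v ^ (-(1/r))) * ρ ^ ((1:ℝ) + ((n:ℝ) - r)/r + (n:ℝ) * (-(1/r))) := by
          rw [← Real.rpow_add hρ, ← Real.rpow_add hρ]
      _ = C := by
          rw [show (1:ℝ) + ((n:ℝ) - r)/r + (n:ℝ) * (-(1/r)) = 0 by field_simp; ring,
            Real.rpow_zero, hC]
          ring
  have h2n : (2:ℝ≥0∞)^n = ENNReal.ofReal (2^n) := by
    rw [ENNReal.ofReal_pow (by norm_num)]; norm_num
  have hcoeff : ENNReal.ofReal (2*ρ) * (2:ℝ≥0∞)^n * ENNReal.ofReal (ρ ^ (((n:ℝ) - r)/r)) *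
      (W⁻¹ * W⁻¹ * W * W ^ ((1:ℝ) - 1/r)) = ENNReal.ofReal C := by
    rw [hWpow, h2n, ← ENNReal.ofReal_mul (by positivity), ← ENNReal.ofReal_mul (by positivity),
      ← ENNReal.ofReal_mul (by positivity), hreal]
  -- main chain
  calc W⁻¹ * (∫⁻ y in B, ENNReal.ofReal |f y - ⨍ z in B, f z|)
      ≤ W⁻¹ * (W⁻¹ * D) := by
        refine mul_le_mul_right ?_ _
        calc ∫⁻ y in B, ENNReal.ofReal |f y - ⨍ z in B, f z|
            ≤ ∫⁻ y in B, W⁻¹ * ∫⁻ z in B, ENNReal.ofReal |f y - f z| :=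
              lintegral_mono fun y => avg_bound hB0 hBT hfint (f y)
          _ = W⁻¹ * D := lintegral_const_mul' _ _ (ENNReal.inv_ne_top.2 hB0)
    _ ≤ W⁻¹ * (W⁻¹ * (ENNReal.ofReal (2*ρ) * ((2:ℝ≥0∞)^n * W * K))) := by gcongr
    _ ≤ W⁻¹ * (W⁻¹ * (ENNReal.ofReal (2*ρ) * ((2:ℝ≥0∞)^n * W *
          (Λ * W ^ ((1:ℝ) - 1/r))))) := by gcongr
    _ ≤ W⁻¹ * (W⁻¹ * (ENNReal.ofReal (2*ρ) * ((2:ℝ≥0∞)^n * W *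
          ((ENNReal.ofReal (ρ ^ (((n:ℝ) - r)/r)) * M) * W ^ ((1:ℝ) - 1/r))))) := by gcongr
    _ = (ENNReal.ofReal (2*ρ) * (2:ℝ≥0∞)^n * ENNReal.ofReal (ρ ^ (((n:ℝ) - r)/r)) *
          (W⁻¹ * W⁻¹ * W * W ^ ((1:ℝ) - 1/r))) * M := by ring
    _ = ENNReal.ofReal C * M := by rw [hcoeff]
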